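/- Let b ≥ a+2 and let (a_{h,n}, e_{i,n}) be an A-module structure on the I×{a,…,b}-graded space with all graded pieces equal, V_{i,n} = V_i, such that every e_{i,n} is invertible. Then there exists a unique pair ((g_{i,n}), B), where each g_{i,n} : V_i → V_i is invertible with g_{i,a} = id and B ∈ ⊕_{h∈H} Hom(V_{s(h)}, V_{t(h)}), such that a_{h,n} = g_{t(h),n+1}∘B_h∘g_{s(h),n}⁻¹ for all h ∈ H and a ≤ n ≤ b−1, and e_{i,n} = g_{i,n+1}∘g_{i,n}⁻¹ for all i ∈ I and a ≤ n ≤ b−1. Moreover B satisfies the preprojective relation: Σ_{h∈H, s(h)=k} ε(h) B_{h̄}∘B_h = 0 for every k ∈ I. -/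

import Mathlib

noncomputable section

/-- Cast of components of a family of `ℂ`-vector spaces along an equality of indices. -/
def lcast {I : Type} (V : I → Type) [∀ i, AddCommGroup (V i)] [∀ i, Module ℂ (V i)]
    {i j : I} (hij : i = j) : V i ≃ₗ[ℂ] V j := by
  subst hij; exact LinearEquiv.refl ℂ (V i)

/-- An `A`-module structure on a graded space with constant graded pieces
`V_{i,n} = V_i` and all `e_{i,n}` invertible is uniquely of the form `Ind((g_{i,n}), B)` for a
normalized family of invertible maps `g` and a representation `B` of the doubled quiver;
moreover `B` satisfies the preprojective relation. -/
theorem stmt9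
    {I H : Type} [Fintype I] [Fintype H] [DecidableEq I]
    (s t : H → I) (bar : H → H)
    (bar_invol : ∀ h, bar (bar h) = h) (bar_ne : ∀ h, bar h ≠ h)
    (s_bar : ∀ h, s (bar h) = t h) (t_bar : ∀ h, t (bar h) = s h)
    (eps : H → ℤ) (eps_pm : ∀ h, eps h = 1 ∨ eps h = -1)
    (eps_bar : ∀ h, eps (bar h) = - eps h)
    (a b : ℤ) (hab : a + 2 ≤ b)
    (V : I → Type)
    [∀ i, AddCommGroup (V i)] [∀ i, Module ℂ (V i)] [∀ i, FiniteDimensional ℂ (V i)]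
    -- an A-module structure on the graded space with V_{i,n} = V_i:
    (aM : ∀ (h : H), ℤ → (V (s h) →ₗ[ℂ] V (t h)))
    (eM : ∀ (i : I), ℤ → (V i →ₗ[ℂ] V i))
    -- (R1) the preprojective relations
    (hR1 : ∀ k : I, ∀ n ∈ Finset.Icc a (b - 2),
      (∑ h : H, if hk : s h = k then
        (eps h : ℂ) • ((lcast V ((t_bar h).trans hk)).toLinearMap ∘ₗ aM (bar h) (n + 1)
          ∘ₗ (lcast V (s_bar h)).symm.toLinearMap ∘ₗ aM h n
          ∘ₗ (lcast V hk).symm.toLinearMap) else 0) = 0)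
    -- (R2) the commutation relations
    (hR2 : ∀ h : H, ∀ n ∈ Finset.Icc a (b - 2),
      eM (t h) (n + 1) ∘ₗ aM h n = aM h (n + 1) ∘ₗ eM (s h) n)
    -- every e_{i,n} is invertible
    (hinv : ∀ i : I, ∀ n ∈ Finset.Icc a (b - 1), Function.Bijective (eM i n)) :
    ∃ (g : ∀ i : I, ℤ → (V i ≃ₗ[ℂ] V i)) (B : ∀ h, V (s h) →ₗ[ℂ] V (t h)),
      (∀ i, g i a = LinearEquiv.refl ℂ (V i)) ∧
      (∀ h : H, ∀ n ∈ Finset.Icc a (b - 1),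
        aM h n = (g (t h) (n + 1)).toLinearMap ∘ₗ B h ∘ₗ ((g (s h) n).symm.toLinearMap)) ∧
      (∀ i : I, ∀ n ∈ Finset.Icc a (b - 1),
        eM i n = (g i (n + 1)).toLinearMap ∘ₗ ((g i n).symm.toLinearMap)) ∧
      -- B satisfies the preprojective relation
      (∀ k : I, (∑ h : H, if hk : s h = k then
        (eps h : ℂ) • ((lcast V ((t_bar h).trans hk)).toLinearMap ∘ₗ B (bar h)
          ∘ₗ (lcast V (s_bar h)).symm.toLinearMap ∘ₗ B h
          ∘ₗ (lcast V hk).symm.toLinearMap) else 0) = 0) ∧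
      -- uniqueness of the pair ((g), B)
      (∀ (g' : ∀ i : I, ℤ → (V i ≃ₗ[ℂ] V i)) (B' : ∀ h, V (s h) →ₗ[ℂ] V (t h)),
        (∀ i, g' i a = LinearEquiv.refl ℂ (V i)) →
        (∀ h : H, ∀ n ∈ Finset.Icc a (b - 1),
          aM h n = (g' (t h) (n + 1)).toLinearMap ∘ₗ B' h ∘ₗ ((g' (s h) n).symm.toLinearMap)) →
        (∀ i : I, ∀ n ∈ Finset.Icc a (b - 1),
          eM i n = (g' i (n + 1)).toLinearMap ∘ₗ ((g' i n).symm.toLinearMap)) →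
        (∀ i, ∀ n ∈ Finset.Icc a b, g' i n = g i n) ∧ B' = B) := by
  classical
  -- the e-maps as linear equivalences
  let E : ∀ i : I, ℤ → (V i ≃ₗ[ℂ] V i) := fun i n =>
    if h : n ∈ Finset.Icc a (b - 1) then LinearEquiv.ofBijective (eM i n) (hinv i n h)
    else LinearEquiv.refl ℂ (V i)
  have hEcoe : ∀ i n, n ∈ Finset.Icc a (b - 1) → ∀ x, E i n x = eM i n x := by
    intro i n hn x
    simp only [E, dif_pos hn, LinearEquiv.ofBijective_apply]
  -- the cumulative products
  let G : ∀ i : I, ℕ → (V i ≃ₗ[ℂ] V i) := fun i =>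
    Nat.rec (LinearEquiv.refl ℂ (V i)) (fun k gk => gk.trans (E i (a + k)))
  let g : ∀ i : I, ℤ → (V i ≃ₗ[ℂ] V i) := fun i n => G i (n - a).toNat
  have hga : ∀ i, g i a = LinearEquiv.refl ℂ (V i) := by
    intro i
    show G i (a - a).toNat = _
    have h00 : (a - a).toNat = 0 := by omega
    rw [h00]
    rfl
  have hstep : ∀ i n, a ≤ n → g i (n + 1) = (g i n).trans (E i n) := by
    intro i n hn
    show G i (n + 1 - a).toNat = (G i (n - a).toNat).trans (E i n)
    have h1 : (n + 1 - a).toNat = (n - a).toNat + 1 := by omega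
    have h2 : a + ((n - a).toNat : ℤ) = n := by omega
    rw [h1]
    show (G i (n - a).toNat).trans (E i (a + ((n - a).toNat : ℤ))) = _
    rw [h2]
  have he : ∀ i : I, ∀ n ∈ Finset.Icc a (b - 1),
      eM i n = (g i (n + 1)).toLinearMap ∘ₗ ((g i n).symm.toLinearMap) := by
    intro i n hn
    have ha' : a ≤ n := (Finset.mem_Icc.mp hn).1
    ext x
    rw [hstep i n ha']
    simp only [LinearMap.comp_apply, LinearEquiv.coe_coe, LinearEquiv.trans_apply,
      LinearEquiv.apply_symm_apply]
    exact (hEcoe i n hn x).symm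
  -- naturality of g with respect to lcast
  have hnat : ∀ {i j : I} (e : i = j) (n : ℤ) (x : V i),
      g j n (lcast V e x) = lcast V e (g i n x) := by
    intro i j e n x
    subst e
    rfl
  have hnatsymm : ∀ {i j : I} (e : i = j) (n : ℤ) (x : V i),
      (g j n).symm (lcast V e x) = lcast V e ((g i n).symm x) := by
    intro i j e n x
    subst e
    rfl
  have hlsymm : ∀ {i j : I} (e : i = j) (x : V j),
      (lcast V e).symm x = lcast V e.symm x := by
    intro i j e x
    subst e
    rfl
  have haIcc : a ∈ Finset.Icc a (b - 1) := Finset.mem_Icc.mpr ⟨le_refl a, by omega⟩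
  have ha1Icc : a + 1 ∈ Finset.Icc a (b - 1) := Finset.mem_Icc.mpr ⟨by omega, by omega⟩
  -- the main induction: aM h n = g ∘ B ∘ g⁻¹
  have hmain : ∀ h : H, ∀ n ∈ Finset.Icc a (b - 1),
      aM h n = (g (t h) (n + 1)).toLinearMap ∘ₗ
        ((g (t h) (a + 1)).symm.toLinearMap ∘ₗ aM h a) ∘ₗ ((g (s h) n).symm.toLinearMap) := by
    intro h n hn
    obtain ⟨h1n, h2n⟩ := Finset.mem_Icc.mp hn
    refine Int.le_induction (motive := fun n _ => n ≤ b - 1 →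
      aM h n = (g (t h) (n + 1)).toLinearMap ∘ₗ
        ((g (t h) (a + 1)).symm.toLinearMap ∘ₗ aM h a) ∘ₗ ((g (s h) n).symm.toLinearMap))
      ?_ ?_ n h1n h2n
    · intro _
      ext x
      simp only [LinearMap.comp_apply, LinearEquiv.coe_coe, hga, LinearEquiv.refl_symm,
        LinearEquiv.refl_apply, LinearEquiv.apply_symm_apply]
    · intro n hn IH h2n
      have hIH := IH (by omega)
      have hnIcc : n ∈ Finset.Icc a (b - 1) := Finset.mem_Icc.mpr ⟨by omega, by omega⟩
      have hn1Icc : n + 1 ∈ Finset.Icc a (b - 1) := Finset.mem_Icc.mpr ⟨by omega, by omega⟩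
      have hn2Icc : n ∈ Finset.Icc a (b - 2) := Finset.mem_Icc.mpr ⟨by omega, by omega⟩
      have hcomm := hR2 h n hn2Icc
      ext x
      set y := (E (s h) n).symm x with hy
      have hxy : x = eM (s h) n y := by
        rw [← hEcoe (s h) n hnIcc y, hy, LinearEquiv.apply_symm_apply]
      have step1 : aM h (n + 1) x = eM (t h) (n + 1) (aM h n y) := by
        conv_lhs => rw [hxy]
        have hc := congrArg (fun f : V (s h) →ₗ[ℂ] V (t h) => f y) hcomm
        simpa only [LinearMap.comp_apply] using hc.symm
      rw [LinearMap.comp_apply, step1, he (t h) (n + 1) hn1Icc, hIH]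
      have hsy : (g (s h) n).symm y = (g (s h) (n + 1)).symm x := by
        rw [hstep (s h) n (by omega)]
        rfl
      simp only [LinearMap.comp_apply, LinearEquiv.coe_coe, LinearEquiv.symm_apply_apply, hsy]
  -- the preprojective relation for B
  have hpre : ∀ k : I, (∑ h : H, if hk : s h = k then
      (eps h : ℂ) • ((lcast V ((t_bar h).trans hk)).toLinearMap ∘ₗ
        ((g (t (bar h)) (a + 1)).symm.toLinearMap ∘ₗ aM (bar h) a)
        ∘ₗ (lcast V (s_bar h)).symm.toLinearMap ∘ₗ
        ((g (t h) (a + 1)).symm.toLinearMap ∘ₗ aM h a)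
        ∘ₗ (lcast V hk).symm.toLinearMap) else 0) = 0 := by
    intro k
    ext x
    have h0 := congrArg (fun f : V k →ₗ[ℂ] V k => f x)
      (hR1 k a (Finset.mem_Icc.mpr ⟨le_refl a, by omega⟩))
    simp only [LinearMap.sum_apply, LinearMap.zero_apply] at h0
    simp only [LinearMap.sum_apply, LinearMap.zero_apply]
    have key : ∀ h : H,
        (if hk : s h = k then
          (eps h : ℂ) • ((lcast V ((t_bar h).trans hk)).toLinearMap ∘ₗ aM (bar h) (a + 1)
            ∘ₗ (lcast V (s_bar h)).symm.toLinearMap ∘ₗ aM h a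
            ∘ₗ (lcast V hk).symm.toLinearMap) else 0) x
        = g k (a + 2) ((if hk : s h = k then
          (eps h : ℂ) • ((lcast V ((t_bar h).trans hk)).toLinearMap ∘ₗ
            ((g (t (bar h)) (a + 1)).symm.toLinearMap ∘ₗ aM (bar h) a)
            ∘ₗ (lcast V (s_bar h)).symm.toLinearMap ∘ₗ
            ((g (t h) (a + 1)).symm.toLinearMap ∘ₗ aM h a)
            ∘ₗ (lcast V hk).symm.toLinearMap) else 0) x) := by
      intro h
      by_cases hk : s h = k
      · rw [dif_pos hk, dif_pos hk]
        simp only [LinearMap.smul_apply, LinearMap.comp_apply, LinearEquiv.coe_coe, map_smul]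
        congr 1
        rw [hmain (bar h) (a + 1) ha1Icc]
        simp only [LinearMap.comp_apply, LinearEquiv.coe_coe]
        have r1 : (g (s (bar h)) (a + 1)).symm
            ((lcast V (s_bar h)).symm (aM h a ((lcast V hk).symm x)))
            = (lcast V (s_bar h)).symm
              ((g (t h) (a + 1)).symm (aM h a ((lcast V hk).symm x))) := by
          rw [hlsymm (s_bar h), hlsymm (s_bar h)]
          exact hnatsymm (s_bar h).symm (a + 1) _
        rw [r1]
        have h21 : a + 1 + 1 = a + 2 := by ring
        rw [h21]
        exact (hnat ((t_bar h).trans hk) (a + 2) _).symm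
      · rw [dif_neg hk, dif_neg hk]
        simp
    have hsum : g k (a + 2) (∑ h : H, (if hk : s h = k then
          (eps h : ℂ) • ((lcast V ((t_bar h).trans hk)).toLinearMap ∘ₗ
            ((g (t (bar h)) (a + 1)).symm.toLinearMap ∘ₗ aM (bar h) a)
            ∘ₗ (lcast V (s_bar h)).symm.toLinearMap ∘ₗ
            ((g (t h) (a + 1)).symm.toLinearMap ∘ₗ aM h a)
            ∘ₗ (lcast V hk).symm.toLinearMap) else 0) x) = 0 := by
      rw [map_sum, ← h0]
      exact Finset.sum_congr rfl (fun h _ => (key h).symm)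
    exact (LinearEquiv.map_eq_zero_iff _).mp hsum
  -- uniqueness of g on [a, b]
  refine ⟨g, fun h => (g (t h) (a + 1)).symm.toLinearMap ∘ₗ aM h a, hga, hmain, he, hpre, ?_⟩
  intro g' B' h0' h1' h2'
  have hgg : ∀ i, ∀ n ∈ Finset.Icc a b, g' i n = g i n := by
    intro i n hn
    obtain ⟨h1n, h2n⟩ := Finset.mem_Icc.mp hn
    refine Int.le_induction (motive := fun n _ => n ≤ b → g' i n = g i n) ?_ ?_ n h1n h2n
    · intro _
      rw [h0' i, hga i]
    · intro n hn IH h2n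
      have hyp := IH (by omega)
      have hnIcc : n ∈ Finset.Icc a (b - 1) := Finset.mem_Icc.mpr ⟨by omega, by omega⟩
      ext x
      have e1 := congrArg (fun f : V i →ₗ[ℂ] V i => f (g' i n x)) (h2' i n hnIcc)
      have e2 := congrArg (fun f : V i →ₗ[ℂ] V i => f (g i n x)) (he i n hnIcc)
      simp only [LinearMap.comp_apply, LinearEquiv.coe_coe, LinearEquiv.symm_apply_apply]
        at e1 e2
      rw [← e1, ← e2, hyp]
  refine ⟨hgg, ?_⟩
  funext h
  ext x
  have hax : aM h a x = g (t h) (a + 1) (B' h x) := by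
    have hc := congrArg (fun f : V (s h) →ₗ[ℂ] V (t h) => f x) (h1' h a haIcc)
    simp only [LinearMap.comp_apply, LinearEquiv.coe_coe, h0', LinearEquiv.refl_symm,
      LinearEquiv.refl_apply] at hc
    rw [hc, hgg (t h) (a + 1) (Finset.mem_Icc.mpr ⟨by omega, by omega⟩)]
  show B' h x = (g (t h) (a + 1)).symm (aM h a x)
  rw [hax, LinearEquiv.symm_apply_apply]
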